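/- Let Γ be a group generated by involutions ρ_0, …, ρ_{n−1} satisfying (ρ_iρ_j)² = 1 for |i − j| ≥ 2 together with the intersection condition ⟨ρ_i : i ∈ I⟩ ∩ ⟨ρ_i : i ∈ J⟩ = ⟨ρ_i : i ∈ I ∩ J⟩ for all subsets I, J of {0, 1, …, n−1} (i.e., Γ is a string C-group). Let Σ be a semisparse subgroup of Γ. Then for every φ ∈ Γ: (i) φ⁻¹Σφ ∩ Γ_0 is a semisparse subgroup of Γ_0 with respect to its generators ρ_1, …, ρ_{n−1}; (ii) φ⁻¹Σφ ∩ Γ_{n−1} is a semisparse subgroup of Γ_{n−1} with respect to its generators ρ_0, …, ρ_{n−2}; and (iii) as sets, φ⁻¹Σφ ∩ (Γ_0 Γ_{n−1}) = (φ⁻¹Σφ ∩ Γ_0)(φ⁻¹Σφ ∩ Γ_{n−1}). -/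

import Mathlib

open Pointwise

/-- A subgroup `S` of a group `G` is *semisparse* with respect to the generating
family `ρ 0, …, ρ (m-1)` if, writing `Γ = ⟨ρ 0, …, ρ (m-1)⟩`,
`Γ_i = ⟨ρ j : j ≠ i⟩`, `Γ_{<i} = ⟨ρ j : j < i⟩`, `Γ_{>i} = ⟨ρ j : j > i⟩`, and
`S^φ = φ⁻¹ S φ`, the following hold:
(a) `S^φ ∩ Γ_i ρ_i = ∅` for all `φ ∈ Γ` and `0 ≤ i ≤ m-1`;
(b) `Γ_{>i} ∩ Γ_{<j} S^φ ⊆ Γ_k (Γ_{>i} ∩ Γ_{<j}) S^φ` for all `φ ∈ Γ` and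
    `0 ≤ i < k < j ≤ m-1`;
(c) `Γ_{>i} ∩ Γ_{<i+1} S ⊆ S` for all `0 ≤ i < m-1`. -/
def IsSemisparse {G : Type*} [Group G] (m : ℕ) (ρ : ℕ → G) (S : Subgroup G) : Prop :=
  (∀ φ ∈ Subgroup.closure (ρ '' Set.Iio m), ∀ i < m,
      ((fun x => φ⁻¹ * x * φ) '' (S : Set G)) ∩
        ((Subgroup.closure (ρ '' {l | l < m ∧ l ≠ i}) : Set G) * {ρ i}) = ∅) ∧
  (∀ φ ∈ Subgroup.closure (ρ '' Set.Iio m), ∀ i k j : ℕ, i < k → k < j → j ≤ m - 1 →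
      ((Subgroup.closure (ρ '' {l | i < l ∧ l < m}) : Set G) ∩
          ((Subgroup.closure (ρ '' {l | l < j}) : Set G) *
            ((fun x => φ⁻¹ * x * φ) '' (S : Set G)))) ⊆
        (Subgroup.closure (ρ '' {l | l < m ∧ l ≠ k}) : Set G) *
          ((Subgroup.closure (ρ '' {l | i < l ∧ l < m}) : Set G) ∩
            (Subgroup.closure (ρ '' {l | l < j}) : Set G)) *
          ((fun x => φ⁻¹ * x * φ) '' (S : Set G))) ∧
  (∀ i : ℕ, i < m - 1 →
      ((Subgroup.closure (ρ '' {l | i < l ∧ l < m}) : Set G) ∩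
          ((Subgroup.closure (ρ '' {l | l < i + 1}) : Set G) * (S : Set G))) ⊆
        (S : Set G))

open Subgroup


section Infra
variable {G : Type*} [Group G] (n : ℕ) (ρ : ℕ → G) (S : Subgroup G)

def Sconj (ψ : G) : Subgroup G := S.comap (MulAut.conj ψ).toMonoidHom

lemma mem_Sconj {ψ x : G} : x ∈ Sconj S ψ ↔ ψ * x * ψ⁻¹ ∈ S := by
  simp [Sconj, Subgroup.mem_comap, MulAut.conj]

lemma Sconj_one : Sconj S 1 = S := by
  ext x; simp [mem_Sconj]

lemma Sconj_conj {ψ x : G} (hx : x ∈ Sconj S ψ) (g : G) : g⁻¹ * x * g ∈ Sconj S (ψ * g) := by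
  rw [mem_Sconj] at hx ⊢
  have : ψ * g * (g⁻¹ * x * g) * (ψ * g)⁻¹ = ψ * x * ψ⁻¹ := by group
  rw [this]; exact hx

lemma Sconj_set (χ : G) : ((fun x => χ⁻¹ * x * χ) '' (S : Set G)) = ((Sconj S χ : Subgroup G) : Set G) := by
  ext y
  constructor
  · rintro ⟨s, hs, rfl⟩
    rw [SetLike.mem_coe, mem_Sconj]
    have : χ * (χ⁻¹ * s * χ) * χ⁻¹ = s := by group
    rw [this]; exact hs
  · intro hy
    rw [SetLike.mem_coe, mem_Sconj] at hy
    exact ⟨χ * y * χ⁻¹, hy, by group⟩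

lemma map_eq_Sconj (φ : G) :
    Subgroup.map (MulAut.conj φ⁻¹).toMonoidHom S = Sconj S φ := by
  ext x
  simp only [Subgroup.mem_map, mem_Sconj]
  constructor
  · rintro ⟨s, hs, rfl⟩
    have : φ * ((MulAut.conj φ⁻¹).toMonoidHom s) * φ⁻¹ = s := by
      show φ * (φ⁻¹ * s * φ⁻¹⁻¹) * φ⁻¹ = s; group
    rw [this]; exact hs
  · intro hx
    refine ⟨φ * x * φ⁻¹, hx, ?_⟩
    show φ⁻¹ * (φ * x * φ⁻¹) * φ⁻¹⁻¹ = x; group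

variable (hinv : ∀ i < n, ρ i ^ 2 = 1)
variable (hcomm : ∀ i < n, ∀ j < n, (i + 2 ≤ j ∨ j + 2 ≤ i) → (ρ i * ρ j) ^ 2 = 1)

section basic
include hinv

lemma rho_mul_self {t : ℕ} (ht : t < n) : ρ t * ρ t = 1 := by
  have := hinv t ht; rwa [pow_two] at this

lemma rho_inv {t : ℕ} (ht : t < n) : (ρ t)⁻¹ = ρ t :=
  inv_eq_of_mul_eq_one_right (rho_mul_self n ρ hinv ht)

include hcomm

lemma rho_comm {i j : ℕ} (hi : i < n) (hj : j < n) (h : i + 2 ≤ j ∨ j + 2 ≤ i) :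
    ρ i * ρ j = ρ j * ρ i := by
  have h2 := hcomm i hi j hj h
  rw [pow_two] at h2
  have : ρ i * ρ j = (ρ i * ρ j)⁻¹ := by
    rw [eq_inv_iff_mul_eq_one]; exact h2
  rw [this, mul_inv_rev, rho_inv n ρ hinv hi, rho_inv n ρ hinv hj]

/-- elements of closures over far-apart index sets commute -/
lemma closure_comm {I J : Set ℕ}
    (hsep : ∀ a ∈ I, ∀ b ∈ J, a < n ∧ b < n ∧ (a + 2 ≤ b ∨ b + 2 ≤ a)) :
    ∀ x ∈ Subgroup.closure (ρ '' I), ∀ y ∈ Subgroup.closure (ρ '' J), x * y = y * x := by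
  intro x hx
  induction hx using Subgroup.closure_induction with
  | mem x hxm =>
    intro y hy
    induction hy using Subgroup.closure_induction with
    | mem y hym =>
      obtain ⟨a, ha, rfl⟩ := hxm
      obtain ⟨b, hb, rfl⟩ := hym
      obtain ⟨h1, h2, h3⟩ := hsep a ha b hb
      exact rho_comm n ρ hinv hcomm h1 h2 h3
    | one => simp
    | mul a b _ _ h1 h2 =>
      calc x * (a * b) = a * x * b := by rw [← mul_assoc, h1]
      _ = a * b * x := by rw [mul_assoc, h2, ← mul_assoc]
    | inv a _ h =>
      have := congrArg (fun z => a⁻¹ * z * a⁻¹) h.symm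
      simpa [mul_assoc] using this
  | one => intro y hy; simp
  | mul a b _ _ h1 h2 =>
    intro y hy
    calc a * b * y = a * (y * b) := by rw [mul_assoc, h2 y hy]
    _ = y * (a * b) := by rw [← mul_assoc, h1 y hy, mul_assoc]
  | inv a _ h =>
    intro y hy
    have := congrArg (fun z => a⁻¹ * z * a⁻¹) (h y hy).symm
    simpa [mul_assoc] using this

end basic

include hinv in
/-- closure of a single involution -/
lemma mem_closure_single {c : ℕ} (hc : c < n) {x : G}
    (hx : x ∈ Subgroup.closure (ρ '' {c})) : x = 1 ∨ x = ρ c := by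
  induction hx using Subgroup.closure_induction with
  | mem y hy =>
    obtain ⟨a, ha, rfl⟩ := hy
    rcases ha with rfl
    exact Or.inr rfl
  | one => exact Or.inl rfl
  | mul a b _ _ ha hb =>
    rcases ha with rfl | rfl <;> rcases hb with rfl | rfl <;>
      simp [rho_mul_self n ρ hinv hc]
  | inv a _ ha =>
    rcases ha with rfl | rfl
    · simp
    · rw [rho_inv n ρ hinv hc]; exact Or.inr rfl


def BB (c : ℕ) : Subgroup G := Subgroup.closure (ρ '' {l | c ≤ l ∧ l < n})
def Ac (c : ℕ) : Subgroup G := Subgroup.closure (ρ '' {l | l < c})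
def Gam (k : ℕ) : Subgroup G := Subgroup.closure (ρ '' {l | l < n ∧ l ≠ k})

lemma BB_mono {c c' : ℕ} (h : c ≤ c') : BB n ρ c' ≤ BB n ρ c :=
  Subgroup.closure_mono (Set.image_mono (by intro l hl; exact ⟨le_trans h hl.1, hl.2⟩))

lemma Ac_mono {c c' : ℕ} (h : c ≤ c') : Ac ρ c ≤ Ac ρ c' :=
  Subgroup.closure_mono (Set.image_mono (by intro l hl; exact lt_of_lt_of_le hl h))

lemma BB_le_Gam {c k : ℕ} (h : k < c) : BB n ρ c ≤ Gam n ρ k :=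
  Subgroup.closure_mono (Set.image_mono (by
    intro l hl; obtain ⟨h1, h2⟩ := hl; exact ⟨h2, by omega⟩))

lemma Ac_le_Gam {c k : ℕ} (h : c ≤ k) (hc : c ≤ n) : Ac ρ c ≤ Gam n ρ k :=
  Subgroup.closure_mono (Set.image_mono (by
    intro l hl; have hl' : l < c := hl; exact ⟨by omega, by omega⟩))

lemma rho_mem_BB {t c : ℕ} (h : c ≤ t) (ht : t < n) : ρ t ∈ BB n ρ c :=
  Subgroup.subset_closure ⟨t, ⟨h, ht⟩, rfl⟩

lemma rho_mem_Ac {t c : ℕ} (h : t < c) : ρ t ∈ Ac ρ c :=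
  Subgroup.subset_closure ⟨t, h, rfl⟩

variable (hinv : ∀ i < n, ρ i ^ 2 = 1)
variable (hcomm : ∀ i < n, ∀ j < n, (i + 2 ≤ j ∨ j + 2 ≤ i) → (ρ i * ρ j) ^ 2 = 1)

include hinv hcomm in
lemma Ac_BB_comm {c c' : ℕ} (h : c + 1 ≤ c') :
    ∀ x ∈ Ac ρ c, ∀ y ∈ BB n ρ c', x * y = y * x := by
  apply closure_comm n ρ hinv hcomm
  intro a ha b hb
  have ha' : a < c := ha
  obtain ⟨hb1, hb2⟩ := hb
  exact ⟨by omega, hb2, by omega⟩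

include hinv hcomm in
lemma rho_BB_comm {t c : ℕ} (h : t + 2 ≤ c) (ht : t < n) :
    ∀ y ∈ BB n ρ c, ρ t * y = y * ρ t := by
  intro y hy
  exact closure_comm n ρ hinv hcomm (I := {t}) (J := {l | c ≤ l ∧ l < n})
    (by rintro a rfl b hb; obtain ⟨hb1, hb2⟩ := hb; exact ⟨ht, hb2, by omega⟩) (ρ t)
    (Subgroup.subset_closure ⟨t, rfl, rfl⟩) y hy

include hinv hcomm in
lemma rho_Ac_comm {t c : ℕ} (h : c + 1 ≤ t) (ht : t < n) :
    ∀ y ∈ Ac ρ c, ρ t * y = y * ρ t := by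
  intro y hy
  exact closure_comm n ρ hinv hcomm (I := {t}) (J := {l | l < c})
    (by rintro a rfl b hb; have hb' : b < c := hb; exact ⟨ht, by omega, by omega⟩) (ρ t)
    (Subgroup.subset_closure ⟨t, rfl, rfl⟩) y hy

include hinv hcomm in
/-- split an element of `Γ_k` into commuting `A_k × B_{k+1}` parts -/
lemma Gam_split {k : ℕ} (hk : k < n) {x : G} (hx : x ∈ Gam n ρ k) :
    ∃ a ∈ Ac ρ k, ∃ b ∈ BB n ρ (k + 1), x = a * b := by
  induction hx using Subgroup.closure_induction with
  | mem y hy =>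
    obtain ⟨l, hl, rfl⟩ := hy
    rcases lt_or_gt_of_ne hl.2 with h | h
    · exact ⟨ρ l, rho_mem_Ac ρ h, 1, one_mem _, (mul_one _).symm⟩
    · exact ⟨1, one_mem _, ρ l, rho_mem_BB n ρ h hl.1, (one_mul _).symm⟩
  | one => exact ⟨1, one_mem _, 1, one_mem _, (one_mul _).symm⟩
  | mul x y _ _ hx hy =>
    obtain ⟨a1, ha1, b1, hb1, rfl⟩ := hx
    obtain ⟨a2, ha2, b2, hb2, rfl⟩ := hy
    refine ⟨a1 * a2, mul_mem ha1 ha2, b1 * b2, mul_mem hb1 hb2, ?_⟩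
    have hc : b1 * a2 = a2 * b1 :=
      (Ac_BB_comm n ρ hinv hcomm (le_refl (k+1)) a2 ha2 b1 hb1).symm
    calc a1 * b1 * (a2 * b2) = a1 * (b1 * a2) * b2 := by group
    _ = a1 * (a2 * b1) * b2 := by rw [hc]
    _ = a1 * a2 * (b1 * b2) := by group
  | inv x _ hx =>
    obtain ⟨a, ha, b, hb, rfl⟩ := hx
    refine ⟨a⁻¹, inv_mem ha, b⁻¹, inv_mem hb, ?_⟩
    have hc : b⁻¹ * a⁻¹ = a⁻¹ * b⁻¹ :=
      Ac_BB_comm n ρ hinv hcomm (le_refl (k+1)) a⁻¹ (inv_mem ha) b⁻¹ (inv_mem hb) |>.symm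
    rw [mul_inv_rev, hc]

end Infra

section Main
variable {G : Type*} [Group G] (n : ℕ) (ρ : ℕ → G) (S : Subgroup G)
variable (hgen : Subgroup.closure (ρ '' Set.Iio n) = ⊤)
variable (hinv : ∀ i < n, ρ i ^ 2 = 1)
variable (hcomm : ∀ i < n, ∀ j < n, (i + 2 ≤ j ∨ j + 2 ≤ i) → (ρ i * ρ j) ^ 2 = 1)
variable (hint : ∀ I J : Set ℕ, I ⊆ Set.Iio n → J ⊆ Set.Iio n →
      Subgroup.closure (ρ '' I) ⊓ Subgroup.closure (ρ '' J) =
        Subgroup.closure (ρ '' (I ∩ J)))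
variable (hS : IsSemisparse n ρ S)

include hint in
lemma mem_inter_closure {I J : Set ℕ} (hI : I ⊆ Set.Iio n) (hJ : J ⊆ Set.Iio n) {x : G}
    (hx : x ∈ Subgroup.closure (ρ '' I)) (hy : x ∈ Subgroup.closure (ρ '' J)) :
    x ∈ Subgroup.closure (ρ '' (I ∩ J)) := by
  rw [← hint I J hI hJ]
  exact ⟨hx, hy⟩

include hgen hS in
/-- condition (a), elementwise -/
lemma cond_a (χ : G) {t : ℕ} (ht : t < n) {w : G} (hw : w ∈ Gam n ρ t) :
    w * ρ t ∉ Sconj S χ := by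
  intro hmem
  have hχ : χ ∈ Subgroup.closure (ρ '' Set.Iio n) := by rw [hgen]; exact Subgroup.mem_top χ
  have h1 := hS.1 χ hχ t ht
  rw [Set.eq_empty_iff_forall_notMem] at h1
  refine h1 (w * ρ t) ⟨?_, ?_⟩
  · rw [Sconj_set]; exact hmem
  · exact Set.mul_mem_mul hw rfl

include hgen hS in
/-- condition (b), elementwise, phrased with cuts -/
lemma cond_b (χ : G) {c k j : ℕ} (hck : c ≤ k) (hkj : k < j) (hj : j ≤ n - 1) (hc : 1 ≤ c)
    {x : G} (hx : x ∈ BB n ρ c) {β : G} (hβ : β ∈ Ac ρ j) (hs : β⁻¹ * x ∈ Sconj S χ) :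
    ∃ α ∈ Gam n ρ k, ∃ δ, δ ∈ BB n ρ c ∧ δ ∈ Ac ρ j ∧ ∃ τ ∈ Sconj S χ, x = α * δ * τ := by
  have hχ : χ ∈ Subgroup.closure (ρ '' Set.Iio n) := by rw [hgen]; exact Subgroup.mem_top χ
  have hset : {l | c - 1 < l ∧ l < n} = {l | c ≤ l ∧ l < n} := by
    ext l; simp only [Set.mem_setOf_eq]; omega
  have h2 := hS.2.1 χ hχ (c - 1) k j (by omega) hkj hj
  have hxmem : x ∈ (Subgroup.closure (ρ '' {l | c - 1 < l ∧ l < n}) : Set G) ∩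
      ((Subgroup.closure (ρ '' {l | l < j}) : Set G) *
        ((fun x => χ⁻¹ * x * χ) '' (S : Set G))) := by
    constructor
    · rw [hset]; exact hx
    · rw [Sconj_set]
      exact Set.mem_mul.2 ⟨β, hβ, β⁻¹ * x, hs, by group⟩
  have := h2 hxmem
  rw [Sconj_set] at this
  obtain ⟨ad, had, τ, hτ, hx1⟩ := Set.mem_mul.1 this
  obtain ⟨α, hα, δ, hδ, hx2⟩ := Set.mem_mul.1 had
  refine ⟨α, hα, δ, ?_, ?_, τ, hτ, by rw [← hx1, ← hx2]⟩
  · have := hδ.1; rw [hset] at this; exact this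
  · exact hδ.2

include hS in
/-- condition (c) for `S` itself, elementwise, phrased with cuts -/
lemma cond_c {c : ℕ} (hc : 1 ≤ c) (hcn : c ≤ n - 1)
    {x : G} (hx : x ∈ BB n ρ c) {β : G} (hβ : β ∈ Ac ρ c) (hs : β⁻¹ * x ∈ S) : x ∈ S := by
  have hn2 : 2 ≤ n := by omega
  have h3 := hS.2.2 (c - 1) (by omega)
  have hset : {l | c - 1 < l ∧ l < n} = {l | c ≤ l ∧ l < n} := by
    ext l; simp only [Set.mem_setOf_eq]; omega
  have hset2 : {l : ℕ | l < c - 1 + 1} = {l | l < c} := by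
    ext l; simp only [Set.mem_setOf_eq]; omega
  have : x ∈ (Subgroup.closure (ρ '' {l | c - 1 < l ∧ l < n}) : Set G) ∩
      ((Subgroup.closure (ρ '' {l | l < c - 1 + 1}) : Set G) * (S : Set G)) := by
    constructor
    · rw [hset]; exact hx
    · rw [hset2]
      exact Set.mem_mul.2 ⟨β, hβ, β⁻¹ * x, hs, by group⟩
  exact h3 this
end Main

/-- statement (c) for the conjugate `ψ⁻¹ S ψ`, at every cut `c` -/
def RPred {G : Type*} [Group G] (n : ℕ) (ρ : ℕ → G) (S : Subgroup G) (ψ : G) : Prop :=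
  ∀ c, 1 ≤ c → c ≤ n - 1 → ∀ x ∈ BB n ρ c, ∀ β ∈ Ac ρ c,
    β⁻¹ * x ∈ Sconj S ψ → x ∈ Sconj S ψ

section RP
variable {G : Type*} [Group G] (n : ℕ) (ρ : ℕ → G) (S : Subgroup G)

lemma sandwich_mul {r a b : G} (hrr : r * r = 1) :
    (r * a * r) * (r * b * r) = r * (a * b) * r := by
  rw [show (r*a*r)*(r*b*r) = r*a*(r*r)*b*r by group, hrr]; group

lemma conj_back {ψ g w : G} (hw : w ∈ Sconj S (ψ * g)) : g * w * g⁻¹ ∈ Sconj S ψ := by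
  have := Sconj_conj S hw g⁻¹
  rwa [show ψ * g * g⁻¹ = ψ by group, inv_inv] at this

variable (hgen : Subgroup.closure (ρ '' Set.Iio n) = ⊤)
variable (hinv : ∀ i < n, ρ i ^ 2 = 1)
variable (hcomm : ∀ i < n, ∀ j < n, (i + 2 ≤ j ∨ j + 2 ≤ i) → (ρ i * ρ j) ^ 2 = 1)
variable (hint : ∀ I J : Set ℕ, I ⊆ Set.Iio n → J ⊆ Set.Iio n →
      Subgroup.closure (ρ '' I) ⊓ Subgroup.closure (ρ '' J) =
        Subgroup.closure (ρ '' (I ∩ J)))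
variable (hS : IsSemisparse n ρ S)

include hS in
lemma RP_one : RPred n ρ S 1 := by
  intro c hc1 hc2 x hx β hβ hs
  rw [Sconj_one] at hs ⊢
  exact cond_c n ρ S hS hc1 hc2 hx hβ hs

include hgen hinv hS in
lemma cut1_free (χ : G) (hn : 1 ≤ n) :
    ∀ x ∈ BB n ρ 1, ∀ β ∈ Ac ρ 1, β⁻¹ * x ∈ Sconj S χ → x ∈ Sconj S χ := by
  intro x hx β hβ hs
  have hset : {l : ℕ | l < 1} = {0} := by ext l; simp
  rw [Ac, hset] at hβ
  rcases mem_closure_single n ρ hinv hn hβ with rfl | rfl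
  · simpa using hs
  · exfalso
    have hsinv : x⁻¹ * ρ 0 ∈ Sconj S χ := by
      have := inv_mem hs
      rwa [mul_inv_rev, inv_inv] at this
    exact cond_a n ρ S hgen hS χ hn
      (BB_le_Gam n ρ (Nat.zero_lt_one) (inv_mem hx)) hsinv

include hgen hinv hcomm hint hS in
/-- key case: cut `c = t`, conjugating by `ρ t` -/
lemma RP_cut_eq {ψ : G} (hRP : RPred n ρ S ψ) {t : ℕ} (h1 : 1 ≤ t) (h2 : t ≤ n - 1) :
    ∀ x ∈ BB n ρ t, ∀ β ∈ Ac ρ t,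
      β⁻¹ * x ∈ Sconj S (ψ * ρ t) → x ∈ Sconj S (ψ * ρ t) := by
  intro x hx β hβ hs
  set r := ρ t with hr
  have ht : t < n := by omega
  have hrr : r * r = 1 := rho_mul_self n ρ hinv ht
  have hrinv : r⁻¹ = r := rho_inv n ρ hinv ht
  have hrr' : ∀ y : G, r * (r * y) = y := fun y => by rw [← mul_assoc, hrr, one_mul]
  have hrBB : r ∈ BB n ρ t := rho_mem_BB n ρ le_rfl ht
  have hz : r * x * r ∈ BB n ρ t := mul_mem (mul_mem hrBB hx) hrBB
  have hσ : r * (β⁻¹ * x) * r ∈ Sconj S ψ := by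
    have := conj_back S (ψ := ψ) (g := r) hs
    rwa [hrinv] at this
  have hσval : (r * β * r)⁻¹ * (r * x * r) = r * (β⁻¹ * x) * r := by
    simp only [mul_inv_rev, hrinv, inv_inv, mul_assoc, hrr', inv_mul_cancel_left,
      mul_inv_cancel_left, one_mul, mul_one]
  by_cases htop : t + 1 ≤ n - 1
  · -- generic case
    have hg : r * β * r ∈ Ac ρ (t + 1) :=
      mul_mem (mul_mem (rho_mem_Ac ρ (Nat.lt_succ_self t)) (Ac_mono ρ (Nat.le_succ t) hβ))
        (rho_mem_Ac ρ (Nat.lt_succ_self t))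
    have hbapp := cond_b n ρ S hgen hS ψ (le_refl t) (Nat.lt_succ_self t) htop h1 hz hg
      (by rw [hσval]; exact hσ)
    obtain ⟨α, hα, δ, hδB, hδA, τ, hτ, heq⟩ := hbapp
    have hδsingle : δ = 1 ∨ δ = r := by
      have hmem := mem_inter_closure n ρ hint
        (by intro l hl; exact hl.2)
        (by intro l hl; have : l < t + 1 := hl; exact Set.mem_Iio.2 (by omega))
        hδB hδA
      have hset : ({l | t ≤ l ∧ l < n} ∩ {l | l < t + 1}) = {t} := by
        ext l; simp only [Set.mem_inter_iff, Set.mem_setOf_eq, Set.mem_singleton_iff]; omega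
      rw [hset] at hmem
      exact mem_closure_single n ρ hinv ht hmem
    rcases hδsingle with rfl | rfl
    · -- δ = 1 : success
      rw [mul_one] at heq
      obtain ⟨a, ha, b, hb, hαab⟩ := Gam_split n ρ hinv hcomm ht hα
      have hab : a * b = b * a := Ac_BB_comm n ρ hinv hcomm le_rfl a ha b hb
      have hveq : b⁻¹ * (r * x * r) = a * τ := by
        rw [heq, hαab, hab]; group
      have hvBB : b⁻¹ * (r * x * r) ∈ BB n ρ t :=
        mul_mem (inv_mem (BB_mono n ρ (Nat.le_succ t) hb)) hz
      have hv : b⁻¹ * (r * x * r) ∈ Sconj S ψ := by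
        refine hRP t h1 h2 _ hvBB a ha ?_
        rw [hveq, inv_mul_cancel_left]; exact hτ
      have hbmem : b ∈ Sconj S ψ := by
        refine hRP (t + 1) (by omega) htop b hb (r * β * r) hg ?_
        have hbval : (r*β*r)⁻¹ * b = (r * (β⁻¹ * x) * r) * (b⁻¹ * (r * x * r))⁻¹ := by
          rw [← hσval]
          group
        rw [hbval]
        exact mul_mem hσ (inv_mem hv)
      have hzS : r * x * r ∈ Sconj S ψ := by
        have hxx : r * x * r = b * (b⁻¹ * (r * x * r)) := by group
        rw [hxx]; exact mul_mem hbmem hv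
      have := Sconj_conj S hzS r
      rwa [hrinv, show r * (r * x * r) * r = r * (r * (x * (r * r))) by group, hrr,
        mul_one, hrr'] at this
    · -- δ = r : contradiction via (a)
      exfalso
      have hw1 : r * ((r * (β⁻¹ * x) * r) * τ⁻¹) * r ∈ Sconj S (ψ * r) := by
        have := Sconj_conj S (mul_mem hσ (inv_mem hτ)) r
        rwa [hrinv] at this
      have hw1val : r * ((r * (β⁻¹ * x) * r) * τ⁻¹) * r = β⁻¹ * r * α := by
        rw [← hσval, heq]
        simp only [mul_inv_rev, hrinv, inv_inv, mul_assoc, hrr', inv_mul_cancel_left,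
          mul_inv_cancel_left, one_mul, mul_one]
        simp only [← mul_assoc, mul_inv_cancel, one_mul]
        simp only [mul_assoc, hrr', hrr, mul_one]
      rw [hw1val] at hw1
      have hw2 := Sconj_conj S hw1 α⁻¹
      rw [inv_inv, show α * (β⁻¹ * r * α) * α⁻¹ = α * β⁻¹ * r * (α * α⁻¹) by group,
        mul_inv_cancel, mul_one] at hw2
      have hαβ : α * β⁻¹ ∈ Gam n ρ t :=
        mul_mem hα (inv_mem (Ac_le_Gam n ρ le_rfl (by omega) hβ))
      exact cond_a n ρ S hgen hS (ψ * r * α⁻¹) ht hαβ hw2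
  · -- top cut : t = n - 1
    have hsetB : {l | t ≤ l ∧ l < n} = {t} := by
      ext l; simp only [Set.mem_setOf_eq, Set.mem_singleton_iff]; omega
    have hzmem : r * x * r ∈ Subgroup.closure (ρ '' {t}) := by
      rw [← hsetB]; exact hz
    have hback : ∀ w : G, r * x * r = w → x = r * w * r := by
      intro w hw
      have := congrArg (fun y => r * y * r) hw
      rw [show r * (r * x * r) * r = r * (r * (x * (r * r))) by group, hrr, mul_one, hrr'] at this
      exact this
    rcases mem_closure_single n ρ hinv ht hzmem with hz1 | hzr
    · have hx1 : x = 1 := by rw [hback 1 hz1, mul_one, hrr]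
      rw [hx1]; exact one_mem _
    · exfalso
      have hxr : x = r := by rw [hback (ρ t) hzr, ← hr, show r * r * r = r * r * r by rfl,
        hrr, one_mul]
      have hσv : r * (β⁻¹ * x) * r = r * β⁻¹ := by
        rw [hxr, show r*(β⁻¹*r)*r = r*β⁻¹*(r*r) by group, hrr, mul_one]
      have hfin : β * r ∈ Sconj S ψ := by
        have := inv_mem (hσv ▸ hσ)
        rwa [mul_inv_rev, inv_inv, hrinv] at this
      exact cond_a n ρ S hgen hS ψ ht (Ac_le_Gam n ρ le_rfl (by omega) hβ) hfin

end RP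

section RP2
variable {G : Type*} [Group G] (n : ℕ) (ρ : ℕ → G) (S : Subgroup G)
variable (hgen : Subgroup.closure (ρ '' Set.Iio n) = ⊤)
variable (hinv : ∀ i < n, ρ i ^ 2 = 1)
variable (hcomm : ∀ i < n, ∀ j < n, (i + 2 ≤ j ∨ j + 2 ≤ i) → (ρ i * ρ j) ^ 2 = 1)
variable (hint : ∀ I J : Set ℕ, I ⊆ Set.Iio n → J ⊆ Set.Iio n →
      Subgroup.closure (ρ '' I) ⊓ Subgroup.closure (ρ '' J) =
        Subgroup.closure (ρ '' (I ∩ J)))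
variable (hS : IsSemisparse n ρ S)

include hgen hinv hcomm hint hS in
/-- hard case: cut `c = t + 1`, conjugating by `ρ t` -/
lemma RP_cut_succ {ψ : G} (hRP : RPred n ρ S ψ) {t : ℕ} (h1 : 1 ≤ t) (h2 : t + 1 ≤ n - 1) :
    ∀ x ∈ BB n ρ (t + 1), ∀ β ∈ Ac ρ (t + 1),
      β⁻¹ * x ∈ Sconj S (ψ * ρ t) → x ∈ Sconj S (ψ * ρ t) := by
  intro x hx β hβ hs
  set r := ρ t with hr
  have ht : t < n := by omega
  have hrr : r * r = 1 := rho_mul_self n ρ hinv ht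
  have hrinv : r⁻¹ = r := rho_inv n ρ hinv ht
  have hrr' : ∀ y : G, r * (r * y) = y := fun y => by rw [← mul_assoc, hrr, one_mul]
  have hrBB : r ∈ BB n ρ t := rho_mem_BB n ρ le_rfl ht
  have hxBBt : x ∈ BB n ρ t := BB_mono n ρ (Nat.le_succ t) hx
  have hz : r * x * r ∈ BB n ρ t := mul_mem (mul_mem hrBB hxBBt) hrBB
  have hh : r * β * r ∈ Ac ρ (t + 1) :=
    mul_mem (mul_mem (rho_mem_Ac ρ (Nat.lt_succ_self t)) hβ) (rho_mem_Ac ρ (Nat.lt_succ_self t))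
  have hσ : r * (β⁻¹ * x) * r ∈ Sconj S ψ := by
    have := conj_back S (ψ := ψ) (g := r) hs
    rwa [hrinv] at this
  have hσval : (r * β * r)⁻¹ * (r * x * r) = r * (β⁻¹ * x) * r := by
    simp only [mul_inv_rev, hrinv, inv_inv, mul_assoc, hrr', inv_mul_cancel_left,
      mul_inv_cancel_left, one_mul, mul_one]
  have hbapp := cond_b n ρ S hgen hS ψ (le_refl t) (Nat.lt_succ_self t) h2 h1 hz hh
    (by rw [hσval]; exact hσ)
  obtain ⟨α, hα, δ, hδB, hδA, τ, hτ, heq⟩ := hbapp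
  have hδsingle : δ = 1 ∨ δ = r := by
    have hmem := mem_inter_closure n ρ hint
      (by intro l hl; exact hl.2)
      (by intro l hl; have : l < t + 1 := hl; exact Set.mem_Iio.2 (by omega))
      hδB hδA
    have hset : ({l | t ≤ l ∧ l < n} ∩ {l | l < t + 1}) = {t} := by
      ext l; simp only [Set.mem_inter_iff, Set.mem_setOf_eq, Set.mem_singleton_iff]; omega
    rw [hset] at hmem
    exact mem_closure_single n ρ hinv ht hmem
  obtain ⟨a, ha, b, hb, hαab⟩ := Gam_split n ρ hinv hcomm ht hα
  have hab : a * b = b * a := Ac_BB_comm n ρ hinv hcomm le_rfl a ha b hb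
  rcases hδsingle with rfl | rfl
  · -- δ = 1 : success
    rw [mul_one] at heq
    have hveq : b⁻¹ * (r * x * r) = a * τ := by
      rw [heq, hαab, hab]; group
    have hvBB : b⁻¹ * (r * x * r) ∈ BB n ρ t :=
      mul_mem (inv_mem (BB_mono n ρ (Nat.le_succ t) hb)) hz
    have hv : b⁻¹ * (r * x * r) ∈ Sconj S ψ := by
      refine hRP t h1 (by omega) _ hvBB a ha ?_
      rw [hveq, inv_mul_cancel_left]; exact hτ
    have hbmem : b ∈ Sconj S ψ := by
      refine hRP (t + 1) (by omega) h2 b hb (r * β * r) hh ?_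
      have hbval : (r*β*r)⁻¹ * b = (r * (β⁻¹ * x) * r) * (b⁻¹ * (r * x * r))⁻¹ := by
        rw [← hσval]; group
      rw [hbval]
      exact mul_mem hσ (inv_mem hv)
    have hzS : r * x * r ∈ Sconj S ψ := by
      have hxx : r * x * r = b * (b⁻¹ * (r * x * r)) := by group
      rw [hxx]; exact mul_mem hbmem hv
    have := Sconj_conj S hzS r
    rwa [hrinv, show r * (r * x * r) * r = r * (r * (x * (r * r))) by group, hrr,
      mul_one, hrr'] at this
  · -- δ = ρ t : contradiction via (a)
    exfalso
    have hveq : b⁻¹ * (r * x * r) = a * (r * τ) := by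
      rw [heq, hαab, hab]; group
    have hvr : (b⁻¹ * (r * x * r)) * r = a * (r * τ * r) := by
      rw [hveq]; group
    have hvrBB : (b⁻¹ * (r * x * r)) * r ∈ BB n ρ t :=
      mul_mem (mul_mem (inv_mem (BB_mono n ρ (Nat.le_succ t) hb)) hz) hrBB
    have hrτr : r * τ * r ∈ Sconj S (ψ * r) := by
      have := Sconj_conj S hτ r
      rwa [hrinv] at this
    have hvrS : (b⁻¹ * (r * x * r)) * r ∈ Sconj S (ψ * r) := by
      refine RP_cut_eq n ρ S hgen hinv hcomm hint hS hRP h1 (by omega) _ hvrBB a ha ?_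
      rw [hvr, inv_mul_cancel_left]; exact hrτr
    have haS : a ∈ Sconj S (ψ * r) := by
      have : a = ((b⁻¹ * (r * x * r)) * r) * (r * τ * r)⁻¹ := by rw [hvr]; group
      rw [this]; exact mul_mem hvrS (inv_mem hrτr)
    have hxval : x = r * (α * r * τ) * r := by
      rw [← heq, show r*(r*x*r)*r = r*(r*(x*(r*r))) by group, hrr, mul_one, hrr']
    have hrτinv : r * τ⁻¹ * r = (r * τ * r)⁻¹ := by
      simp only [mul_inv_rev, hrinv]; group
    have hP2 : (β⁻¹*x)*(r*τ⁻¹*r) ∈ Sconj S (ψ * r) := by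
      rw [hrτinv]; exact mul_mem hs (inv_mem hrτr)
    have hP2val : (β⁻¹*x)*(r*τ⁻¹*r) = β⁻¹*r*(a*b) := by
      rw [hxval, hαab]
      simp only [mul_inv_rev, hrinv, inv_inv, mul_assoc, hrr', inv_mul_cancel_left,
        mul_inv_cancel_left, one_mul, mul_one, hrr]
    rw [hP2val] at hP2
    have hw2 : (β⁻¹*r*(a*b))*a⁻¹ ∈ Sconj S (ψ * r) := mul_mem hP2 (inv_mem haS)
    have hw2val : (β⁻¹*r*(a*b))*a⁻¹ = β⁻¹*(r*b) := by
      rw [hab]; group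
    rw [hw2val] at hw2
    have hfin0 : (β⁻¹*x)⁻¹ * (β⁻¹*(r*b)) ∈ Sconj S (ψ * r) := mul_mem (inv_mem hs) hw2
    have hfinval : (β⁻¹*x)⁻¹ * (β⁻¹*(r*b)) = x⁻¹*(r*b) := by group
    rw [hfinval] at hfin0
    have hconj := Sconj_conj S hfin0 b⁻¹
    rw [inv_inv, show b * (x⁻¹*(r*b)) * b⁻¹ = b*x⁻¹*r*(b*b⁻¹) by group,
      mul_inv_cancel, mul_one] at hconj
    have hbx : b * x⁻¹ ∈ Gam n ρ t :=
      mul_mem (BB_le_Gam n ρ (Nat.lt_succ_self t) hb)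
        (inv_mem (BB_le_Gam n ρ (Nat.lt_succ_self t) hx))
    exact cond_a n ρ S hgen hS (ψ * r * b⁻¹) ht hbx
      (by rwa [show b*x⁻¹*r = (b*x⁻¹) * ρ t by rw [hr]] at hconj)

include hgen hinv hcomm hint hS in
lemma RP_step {t : ℕ} (ht : t < n) {ψ : G} (hRP : RPred n ρ S ψ) :
    RPred n ρ S (ψ * ρ t) := by
  intro c hc1 hc2 x hx β hβ hs
  set r := ρ t with hr
  have hrr : r * r = 1 := rho_mul_self n ρ hinv ht
  have hrinv : r⁻¹ = r := rho_inv n ρ hinv ht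
  rcases Nat.lt_or_ge (t + 1) c with hlt | hge
  · -- t + 2 ≤ c : ρ t commutes with BB c, and ρ t ∈ Ac c
    have hcomx : ∀ y ∈ BB n ρ c, r * y = y * r := rho_BB_comm n ρ hinv hcomm (by omega) ht
    have hβ' : r * β * r ∈ Ac ρ c :=
      mul_mem (mul_mem (rho_mem_Ac ρ (by omega)) hβ) (rho_mem_Ac ρ (by omega))
    have hsc : (r * β * r)⁻¹ * x ∈ Sconj S ψ := by
      have h0 := conj_back S (ψ := ψ) (g := r) hs
      rw [hrinv] at h0
      have hvv : (r * β * r)⁻¹ * x = r * (β⁻¹ * x) * r := by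
        rw [show (r*β*r)⁻¹ * x = r⁻¹ * β⁻¹ * (r⁻¹ * x) by group, hrinv, hcomx x hx]
        group
      rw [hvv]; exact h0
    have hxS : x ∈ Sconj S ψ := hRP c hc1 hc2 x hx _ hβ' hsc
    have h3 := Sconj_conj S hxS r
    rw [hrinv, hcomx x hx, mul_assoc, hrr, mul_one] at h3
    exact h3
  · rcases Nat.lt_or_ge t c with hltc | hgec
    · -- c = t + 1
      have hceq : c = t + 1 := by omega
      subst hceq
      rcases Nat.eq_or_lt_of_le hc1 with h10 | h1t
      · -- t = 0 : free cut 1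
        have ht0 : t = 0 := by omega
        subst ht0
        exact cut1_free n ρ S hgen hinv hS (ψ * r) (by omega) x hx β hβ hs
      · -- t ≥ 1 : hard case
        exact RP_cut_succ n ρ S hgen hinv hcomm hint hS hRP (by omega) hc2 x hx β hβ hs
    · rcases Nat.eq_or_lt_of_le hgec with hceq | hclt
      · -- c = t
        subst hceq
        exact RP_cut_eq n ρ S hgen hinv hcomm hint hS hRP hc1 hc2 x hx β hβ hs
      · -- c < t : ρ t ∈ BB c, commutes with Ac c
        have hcoma : ∀ y ∈ Ac ρ c, r * y = y * r := rho_Ac_comm n ρ hinv hcomm (by omega) ht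
        have hrBB : r ∈ BB n ρ c := rho_mem_BB n ρ (by omega) ht
        have hrr' : ∀ y : G, r * (r * y) = y := fun y => by rw [← mul_assoc, hrr, one_mul]
        have hx2 : r * x * r ∈ BB n ρ c := mul_mem (mul_mem hrBB hx) hrBB
        have hs2 : β⁻¹ * (r * x * r) ∈ Sconj S ψ := by
          have h0 := conj_back S (ψ := ψ) (g := r) hs
          rw [hrinv] at h0
          have hvv : β⁻¹ * (r * x * r) = r * (β⁻¹ * x) * r := by
            rw [show r * (β⁻¹ * x) * r = (r * β⁻¹) * x * r by group,
              hcoma β⁻¹ (inv_mem hβ)]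
            group
          rw [hvv]; exact h0
        have hx2S : r * x * r ∈ Sconj S ψ := hRP c hc1 hc2 _ hx2 β hβ hs2
        have h3 := Sconj_conj S hx2S r
        rw [hrinv, show r * (r * x * r) * r = r * (r * (x * (r * r))) by group, hrr,
          mul_one, hrr'] at h3
        exact h3

include hgen hinv hcomm hint hS in
lemma RP_all (ψ : G) : RPred n ρ S ψ := by
  have hmain : ∀ g ∈ Subgroup.closure (ρ '' Set.Iio n),
      (∀ χ : G, RPred n ρ S χ → RPred n ρ S (χ * g)) ∧
      (∀ χ : G, RPred n ρ S χ → RPred n ρ S (χ * g⁻¹)) := by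
    intro g hg
    induction hg using Subgroup.closure_induction with
    | mem y hy =>
      obtain ⟨t, htn, rfl⟩ := hy
      have htn' : t < n := htn
      constructor
      · intro χ hχ; exact RP_step n ρ S hgen hinv hcomm hint hS htn' hχ
      · intro χ hχ
        rw [rho_inv n ρ hinv htn']
        exact RP_step n ρ S hgen hinv hcomm hint hS htn' hχ
    | one =>
      constructor
      · intro χ hχ; rwa [mul_one]
      · intro χ hχ; rwa [inv_one, mul_one]
    | mul a b _ _ hpa hpb =>
      constructor
      · intro χ hχ
        rw [← mul_assoc]
        exact hpb.1 _ (hpa.1 χ hχ)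
      · intro χ hχ
        rw [mul_inv_rev, ← mul_assoc]
        exact hpa.2 _ (hpb.2 χ hχ)
    | inv a _ hpa =>
      constructor
      · intro χ hχ; exact hpa.2 χ hχ
      · intro χ hχ; rw [inv_inv]; exact hpa.1 χ hχ
  have hψ : ψ ∈ Subgroup.closure (ρ '' Set.Iio n) := by rw [hgen]; exact Subgroup.mem_top ψ
  have := (hmain ψ hψ).1 1 (RP_one n ρ S hS)
  rwa [one_mul] at this

end RP2

section Hlem
variable {G : Type*} [Group G] (n : ℕ) (ρ : ℕ → G) (S : Subgroup G)
variable (hgen : Subgroup.closure (ρ '' Set.Iio n) = ⊤)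
variable (hinv : ∀ i < n, ρ i ^ 2 = 1)
variable (hcomm : ∀ i < n, ∀ j < n, (i + 2 ≤ j ∨ j + 2 ≤ i) → (ρ i * ρ j) ^ 2 = 1)
variable (hint : ∀ I J : Set ℕ, I ⊆ Set.Iio n → J ⊆ Set.Iio n →
      Subgroup.closure (ρ '' I) ⊓ Subgroup.closure (ρ '' J) =
        Subgroup.closure (ρ '' (I ∩ J)))
variable (hS : IsSemisparse n ρ S)

include hgen hinv hcomm hint hS in
lemma Hlem (d : ℕ) : ∀ (ψ : G) (c : ℕ), 1 ≤ c → c + d ≤ n - 1 →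
    ∀ x ∈ BB n ρ c, ∀ β ∈ Ac ρ (c + d), β⁻¹ * x ∈ Sconj S ψ →
    ∃ μ, μ ∈ BB n ρ c ∧ μ ∈ Ac ρ (c + d) ∧ μ⁻¹ * x ∈ Sconj S ψ ∧ μ⁻¹ * x ∈ BB n ρ c := by
  induction d with
  | zero =>
    intro ψ c hc1 hcb x hx β hβ hs
    refine ⟨1, one_mem _, one_mem _, ?_, ?_⟩
    · rw [inv_one, one_mul]
      exact RP_all n ρ S hgen hinv hcomm hint hS ψ c hc1 (by omega) x hx β hβ hs
    · rw [inv_one, one_mul]; exact hx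
  | succ d ihd =>
    intro ψ c hc1 hcb x hx β hβ hs
    have hclt : c < c + (d + 1) := by omega
    obtain ⟨α, hα, δ, hδB, hδA, τ, hτ, heq⟩ :=
      cond_b n ρ S hgen hS ψ (le_refl c) hclt (by omega) hc1 hx hβ hs
    obtain ⟨a, ha, b', hb', hαab⟩ := Gam_split n ρ hinv hcomm (by omega) hα
    have hab : a * b' = b' * a := Ac_BB_comm n ρ hinv hcomm le_rfl a ha b' hb'
    have hveq : b'⁻¹ * x = a * (δ * τ) := by
      rw [heq, hαab, hab]; group
    have hwval : (b'⁻¹ * x) * δ⁻¹ = a * (δ * τ * δ⁻¹) := by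
      rw [hveq]; group
    have hwBB : (b'⁻¹ * x) * δ⁻¹ ∈ BB n ρ c :=
      mul_mem (mul_mem (inv_mem (BB_mono n ρ (Nat.le_succ c) hb')) hx) (inv_mem hδB)
    have hδτ : δ * τ * δ⁻¹ ∈ Sconj S (ψ * δ⁻¹) := by
      have := Sconj_conj S hτ δ⁻¹
      rwa [inv_inv] at this
    have hwS : (b'⁻¹ * x) * δ⁻¹ ∈ Sconj S (ψ * δ⁻¹) := by
      refine RP_all n ρ S hgen hinv hcomm hint hS (ψ * δ⁻¹) c hc1 (by omega) _ hwBB a ha ?_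
      rw [hwval, inv_mul_cancel_left]; exact hδτ
    have hu : δ⁻¹ * (b'⁻¹ * x) ∈ Sconj S ψ := by
      have := Sconj_conj S hwS δ
      rwa [show ψ * δ⁻¹ * δ = ψ by group,
        show δ⁻¹ * ((b'⁻¹ * x) * δ⁻¹) * δ = δ⁻¹ * (b'⁻¹ * x) by group] at this
    have huBB : δ⁻¹ * (b'⁻¹ * x) ∈ BB n ρ c :=
      mul_mem (inv_mem hδB) (mul_mem (inv_mem (BB_mono n ρ (Nat.le_succ c) hb')) hx)
    -- step 2 : treat b'
    have hβ'' : a⁻¹ * β * δ⁻¹ ∈ Ac ρ (c + (d + 1)) :=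
      mul_mem (mul_mem (inv_mem (Ac_mono ρ (by omega) ha)) hβ) (inv_mem hδA)
    have hb'eq : (a⁻¹ * β * δ⁻¹)⁻¹ * b' = δ * ((β⁻¹ * x) * τ⁻¹) * δ⁻¹ := by
      rw [heq, hαab]; group
    have hs'' : (a⁻¹ * β * δ⁻¹)⁻¹ * b' ∈ Sconj S (ψ * δ⁻¹) := by
      rw [hb'eq]
      have := Sconj_conj S (mul_mem hs (inv_mem hτ)) δ⁻¹
      rwa [inv_inv] at this
    have hsucc : c + 1 + d = c + (d + 1) := by omega
    obtain ⟨ν, hνB, hνA, hνs, hνBB⟩ := ihd (ψ * δ⁻¹) (c + 1) (by omega) (by omega) b' hb'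
      (a⁻¹ * β * δ⁻¹) (by rw [hsucc]; exact hβ'') hs''
    rw [hsucc] at hνA
    refine ⟨ν * δ, mul_mem (BB_mono n ρ (Nat.le_succ c) hνB) hδB, mul_mem hνA hδA, ?_, ?_⟩
    · have hval : (ν * δ)⁻¹ * x = (δ⁻¹ * (ν⁻¹ * b') * δ) * (δ⁻¹ * (b'⁻¹ * x)) := by group
      rw [hval]
      refine mul_mem ?_ hu
      have := Sconj_conj S hνs δ
      rwa [show ψ * δ⁻¹ * δ = ψ by group] at this
    · have hval : (ν * δ)⁻¹ * x = (δ⁻¹ * (ν⁻¹ * b') * δ) * (δ⁻¹ * (b'⁻¹ * x)) := by group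
      rw [hval]
      refine mul_mem (mul_mem (mul_mem (inv_mem hδB) ?_) hδB) huBB
      exact BB_mono n ρ (Nat.le_succ c) hνBB

include hgen hinv hcomm hint hS in
lemma Hfull (ψ : G) {c b : ℕ} (hc : 1 ≤ c) (hcb : c ≤ b) (hb : b ≤ n - 1) :
    ∀ x ∈ BB n ρ c, ∀ β ∈ Ac ρ b, β⁻¹ * x ∈ Sconj S ψ →
    ∃ μ, μ ∈ BB n ρ c ∧ μ ∈ Ac ρ b ∧ μ⁻¹ * x ∈ Sconj S ψ ∧ μ⁻¹ * x ∈ BB n ρ c := by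
  have h := Hlem n ρ S hgen hinv hcomm hint hS (b - c) ψ c hc (by omega)
  rwa [show c + (b - c) = b by omega] at h

include hgen hinv hcomm hint hS in
lemma mirrorH (ψ : G) {c b : ℕ} (hc : 1 ≤ c) (hcb : c ≤ b) (hb : b ≤ n - 1) :
    ∀ x ∈ Ac ρ b, ∀ u ∈ BB n ρ c, u⁻¹ * x ∈ Sconj S ψ →
    ∃ μ, μ ∈ BB n ρ c ∧ μ ∈ Ac ρ b ∧ μ⁻¹ * x ∈ Sconj S ψ ∧ μ⁻¹ * x ∈ Ac ρ b := by
  intro x hx u hu hs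
  obtain ⟨μ, hμB, hμA, hμs, hμBB⟩ :=
    Hfull n ρ S hgen hinv hcomm hint hS ψ hc hcb hb u hu x hx
      (by rw [show x⁻¹ * u = (u⁻¹ * x)⁻¹ by group]; exact inv_mem hs)
  refine ⟨μ, hμB, hμA, ?_, mul_mem (inv_mem hμA) hx⟩
  rw [show μ⁻¹ * x = (μ⁻¹ * u) * (u⁻¹ * x) by group]
  exact mul_mem hμs hs

end Hlem

lemma shift_image {G : Type*} (ρ : ℕ → G) (A : Set ℕ) :
    (fun l => ρ (l + 1)) '' A = ρ '' ((fun l => l + 1) '' A) := by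
  rw [← Set.image_comp]; rfl

lemma shift_le_closure {G : Type*} [Group G] (ρ : ℕ → G) {A B : Set ℕ}
    (h : ∀ l ∈ A, l + 1 ∈ B) :
    Subgroup.closure ((fun l => ρ (l + 1)) '' A) ≤ Subgroup.closure (ρ '' B) := by
  rw [shift_image]
  refine Subgroup.closure_mono (Set.image_mono ?_)
  rintro t ⟨l, hl, rfl⟩
  exact h l hl

lemma le_shift_closure {G : Type*} [Group G] (ρ : ℕ → G) {A B : Set ℕ}
    (h : ∀ t ∈ B, ∃ l ∈ A, l + 1 = t) :
    Subgroup.closure (ρ '' B) ≤ Subgroup.closure ((fun l => ρ (l + 1)) '' A) := by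
  rw [shift_image]
  refine Subgroup.closure_mono (Set.image_mono ?_)
  intro t ht
  exact h t ht


/-- Let `Γ` be a string C-group with generating involutions
`ρ 0, …, ρ (n-1)`, and let `S` be a semisparse subgroup of `Γ`. Then for every
`φ ∈ Γ`: (i) `φ⁻¹ S φ ∩ Γ_0` is semisparse in `Γ_0 = ⟨ρ 1, …, ρ (n-1)⟩`;
(ii) `φ⁻¹ S φ ∩ Γ_{n-1}` is semisparse in `Γ_{n-1} = ⟨ρ 0, …, ρ (n-2)⟩`; and
(iii) `φ⁻¹ S φ ∩ (Γ_0 Γ_{n-1}) = (φ⁻¹ S φ ∩ Γ_0)(φ⁻¹ S φ ∩ Γ_{n-1})` as sets. -/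
theorem semisparse_inter_distinguished {G : Type*} [Group G] (n : ℕ) (ρ : ℕ → G)
    (hgen : Subgroup.closure (ρ '' Set.Iio n) = ⊤)
    (hinv : ∀ i < n, ρ i ^ 2 = 1)
    (hcomm : ∀ i < n, ∀ j < n, (i + 2 ≤ j ∨ j + 2 ≤ i) → (ρ i * ρ j) ^ 2 = 1)
    (hint : ∀ I J : Set ℕ, I ⊆ Set.Iio n → J ⊆ Set.Iio n →
      Subgroup.closure (ρ '' I) ⊓ Subgroup.closure (ρ '' J) =
        Subgroup.closure (ρ '' (I ∩ J)))
    (S : Subgroup G) (hS : IsSemisparse n ρ S) (φ : G) :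
    IsSemisparse (n - 1) (fun l => ρ (l + 1))
        (Subgroup.map (MulAut.conj φ⁻¹).toMonoidHom S ⊓
          Subgroup.closure (ρ '' {l | l < n ∧ l ≠ 0})) ∧
    IsSemisparse (n - 1) ρ
        (Subgroup.map (MulAut.conj φ⁻¹).toMonoidHom S ⊓
          Subgroup.closure (ρ '' {l | l < n ∧ l ≠ n - 1})) ∧
    ((Subgroup.map (MulAut.conj φ⁻¹).toMonoidHom S : Set G) ∩
        ((Subgroup.closure (ρ '' {l | l < n ∧ l ≠ 0}) : Set G) *
          (Subgroup.closure (ρ '' {l | l < n ∧ l ≠ n - 1}) : Set G))) =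
      ((Subgroup.map (MulAut.conj φ⁻¹).toMonoidHom S ⊓
          Subgroup.closure (ρ '' {l | l < n ∧ l ≠ 0}) : Subgroup G) : Set G) *
        ((Subgroup.map (MulAut.conj φ⁻¹).toMonoidHom S ⊓
            Subgroup.closure (ρ '' {l | l < n ∧ l ≠ n - 1}) : Subgroup G) : Set G) := by
  have hset0 : {l | l < n ∧ l ≠ 0} = {l : ℕ | 1 ≤ l ∧ l < n} := by
    ext l; simp only [Set.mem_setOf_eq]; omega
  have hsetN : {l | l < n ∧ l ≠ n - 1} = {l : ℕ | l < n - 1} := by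
    ext l; simp only [Set.mem_setOf_eq]; omega
  have hG0 : Subgroup.closure (ρ '' {l | l < n ∧ l ≠ 0}) = BB n ρ 1 := by rw [BB, hset0]
  have hGN : Subgroup.closure (ρ '' {l | l < n ∧ l ≠ n - 1}) = Ac ρ (n - 1) := by
    rw [Ac, hsetN]
  have hmapS : Subgroup.map (MulAut.conj φ⁻¹).toMonoidHom S = Sconj S φ := map_eq_Sconj S φ
  set S1 := Subgroup.map (MulAut.conj φ⁻¹).toMonoidHom S ⊓
    Subgroup.closure (ρ '' {l | l < n ∧ l ≠ 0}) with hS1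
  set S2 := Subgroup.map (MulAut.conj φ⁻¹).toMonoidHom S ⊓
    Subgroup.closure (ρ '' {l | l < n ∧ l ≠ n - 1}) with hS2
  have memS1 : ∀ g : G, g ∈ S1 ↔ g ∈ Sconj S φ ∧ g ∈ BB n ρ 1 := by
    intro g; rw [hS1, Subgroup.mem_inf, hmapS, hG0]
  have memS2 : ∀ g : G, g ∈ S2 ↔ g ∈ Sconj S φ ∧ g ∈ Ac ρ (n - 1) := by
    intro g; rw [hS2, Subgroup.mem_inf, hmapS, hGN]
  refine ⟨⟨?_, ?_, ?_⟩, ⟨?_, ?_, ?_⟩, ?_⟩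
  · -- (i)(a)
    intro ψ hψ i hi
    rw [Set.eq_empty_iff_forall_notMem]
    rintro y ⟨hy1, hy2⟩
    obtain ⟨g, hg, rfl⟩ := hy1
    obtain ⟨w, hw, e, he, heq⟩ := Set.mem_mul.1 hy2
    rw [Set.mem_singleton_iff] at he
    subst he
    have hgφ : g ∈ Sconj S φ := ((memS1 g).1 hg).1
    have hwG : w ∈ Gam n ρ (i + 1) := by
      refine shift_le_closure ρ ?_ hw
      intro l hl
      obtain ⟨h1, h2⟩ := hl
      exact ⟨by omega, by omega⟩
    exact cond_a n ρ S hgen hS (φ * ψ) (by omega : i + 1 < n) hwG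
      (by rw [heq]; exact Sconj_conj S hgφ ψ)
  · -- (i)(b)
    intro ψ hψ i k j hik hkj hj x hx
    have hn4 : j + 1 ≤ n - 1 := by omega
    have hψB : ψ ∈ BB n ρ 1 := by
      refine shift_le_closure ρ ?_ hψ
      intro l hl
      have hl' : l < n - 1 := hl
      exact ⟨by omega, by omega⟩
    obtain ⟨hx1, hx2⟩ := hx
    obtain ⟨β, hβ, s, hs, heq⟩ := Set.mem_mul.1 hx2
    obtain ⟨g, hg, rfl⟩ := hs
    have hgφ : g ∈ Sconj S φ := ((memS1 g).1 hg).1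
    have hgB : g ∈ BB n ρ 1 := ((memS1 g).1 hg).2
    have hsθ : ψ⁻¹ * g * ψ ∈ Sconj S (φ * ψ) := Sconj_conj S hgφ ψ
    have hsB : ψ⁻¹ * g * ψ ∈ BB n ρ 1 := mul_mem (mul_mem (inv_mem hψB) hgB) hψB
    have hx1' : x ∈ BB n ρ (i + 2) := by
      rw [SetLike.mem_coe] at hx1
      refine shift_le_closure ρ ?_ hx1
      intro l hl
      obtain ⟨h1, h2⟩ := hl
      exact ⟨by omega, by omega⟩
    have hβA : β ∈ Ac ρ (j + 1) := by
      rw [SetLike.mem_coe] at hβ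
      refine shift_le_closure ρ ?_ hβ
      intro l hl
      have hl' : l < j := hl
      exact (by omega : l + 1 < j + 1)
    have hβB : β ∈ BB n ρ 1 := by
      rw [SetLike.mem_coe] at hβ
      refine shift_le_closure ρ ?_ hβ
      intro l hl
      have hl' : l < j := hl
      exact ⟨by omega, by omega⟩
    have hsx : β⁻¹ * x = ψ⁻¹ * g * ψ := by rw [← heq, inv_mul_cancel_left]
    obtain ⟨α, hα, δ, hδB, hδA, τ, hτ, heq2⟩ :=
      cond_b n ρ S hgen hS (φ * ψ) (by omega : i + 2 ≤ k + 1) (by omega) hn4 (by omega)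
        hx1' hβA (by rw [hsx]; exact hsθ)
    obtain ⟨a, ha, b, hb, hαab⟩ := Gam_split n ρ hinv hcomm (by omega : k + 1 < n) hα
    have hab : a * b = b * a := Ac_BB_comm n ρ hinv hcomm le_rfl a ha b hb
    have hwval : (b⁻¹ * x) * δ⁻¹ = a * (δ * τ * δ⁻¹) := by
      rw [heq2, hαab, hab]; group
    have hwB : (b⁻¹ * x) * δ⁻¹ ∈ BB n ρ 1 :=
      mul_mem (mul_mem (inv_mem (BB_mono n ρ (by omega) hb))
        (BB_mono n ρ (by omega) hx1')) (inv_mem (BB_mono n ρ (by omega) hδB))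
    have hδτ : δ * τ * δ⁻¹ ∈ Sconj S (φ * ψ * δ⁻¹) := by
      have := Sconj_conj S hτ δ⁻¹
      rwa [inv_inv] at this
    obtain ⟨μ, hμB, hμA, hμs, hμBB⟩ :=
      Hfull n ρ S hgen hinv hcomm hint hS (φ * ψ * δ⁻¹) (le_refl 1) (by omega : 1 ≤ k + 1)
        (by omega) _ hwB a ha (by rw [hwval, inv_mul_cancel_left]; exact hδτ)
    set sfin := μ⁻¹ * ((b⁻¹ * x) * δ⁻¹) with hsfin
    set rfin := δ⁻¹ * sfin * δ with hrfin
    have hrS : rfin ∈ Sconj S (φ * ψ) := by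
      have := Sconj_conj S hμs δ
      rwa [show φ * ψ * δ⁻¹ * δ = φ * ψ by group] at this
    have hrB : rfin ∈ BB n ρ 1 := by
      refine mul_mem (mul_mem (inv_mem (BB_mono n ρ (by omega) hδB)) hμBB)
        (BB_mono n ρ (by omega) hδB)
    have heqfin : ((b * μ) * δ) * rfin = x := by
      rw [hrfin, hsfin]; group
    rw [← heqfin]
    refine Set.mul_mem_mul (Set.mul_mem_mul ?_ ?_) ?_
    · -- b * μ in the shifted Γ_k
      rw [SetLike.mem_coe]
      refine mul_mem ?_ ?_
      · refine le_shift_closure ρ ?_ hb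
        intro t ht
        obtain ⟨h1, h2⟩ := ht
        exact ⟨t - 1, ⟨by omega, by omega⟩, by omega⟩
      · have hμint := mem_inter_closure n ρ hint (I := {l | 1 ≤ l ∧ l < n})
          (J := {l | l < k + 1}) (by intro l hl; exact hl.2)
          (by intro l hl; have : l < k + 1 := hl; exact Set.mem_Iio.2 (by omega)) hμB hμA
        refine le_shift_closure ρ ?_ hμint
        rintro t ⟨ht1, ht2⟩
        obtain ⟨h1, h2⟩ := ht1
        have h3 : t < k + 1 := ht2
        exact ⟨t - 1, ⟨by omega, by omega⟩, by omega⟩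
    · -- δ in the middle
      constructor
      · rw [SetLike.mem_coe]
        refine le_shift_closure ρ ?_ hδB
        rintro t ⟨ht1, ht2⟩
        exact ⟨t - 1, ⟨by omega, by omega⟩, by omega⟩
      · rw [SetLike.mem_coe]
        have hδint := mem_inter_closure n ρ hint (I := {l | i + 2 ≤ l ∧ l < n})
          (J := {l | l < j + 1}) (by intro l hl; exact hl.2)
          (by intro l hl; have : l < j + 1 := hl; exact Set.mem_Iio.2 (by omega)) hδB hδA
        refine le_shift_closure ρ ?_ hδint
        rintro t ⟨ht1, ht2⟩
        obtain ⟨h1, h2⟩ := ht1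
        have h3 : t < j + 1 := ht2
        exact ⟨t - 1, show t - 1 < j by omega, by omega⟩
    · -- rfin in the conjugated S1
      refine ⟨ψ * rfin * ψ⁻¹, ?_, by group⟩
      rw [SetLike.mem_coe, memS1]
      constructor
      · exact conj_back S hrS
      · exact mul_mem (mul_mem hψB hrB) (inv_mem hψB)
  · -- (i)(c)
    intro i hi x hx
    obtain ⟨hx1, hx2⟩ := hx
    obtain ⟨β, hβ, s, hs, heq⟩ := Set.mem_mul.1 hx2
    have hsS : s ∈ Sconj S φ := ((memS1 s).1 hs).1
    have hx1' : x ∈ BB n ρ (i + 2) := by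
      rw [SetLike.mem_coe] at hx1
      refine shift_le_closure ρ ?_ hx1
      intro l hl
      obtain ⟨h1, h2⟩ := hl
      exact ⟨by omega, by omega⟩
    have hβA : β ∈ Ac ρ (i + 2) := by
      rw [SetLike.mem_coe] at hβ
      refine shift_le_closure ρ ?_ hβ
      intro l hl
      have hl' : l < i + 1 := hl
      exact (by omega : l + 1 < i + 2)
    have hxS : x ∈ Sconj S φ := by
      refine RP_all n ρ S hgen hinv hcomm hint hS φ (i + 2) (by omega) (by omega) x hx1' β hβA ?_
      rw [show β⁻¹ * x = s by rw [← heq, inv_mul_cancel_left]]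
      exact hsS
    rw [SetLike.mem_coe, memS1]
    exact ⟨hxS, BB_mono n ρ (by omega) hx1'⟩
  · -- (ii)(a)
    intro ψ hψ i hi
    rw [Set.eq_empty_iff_forall_notMem]
    rintro y ⟨hy1, hy2⟩
    obtain ⟨g, hg, rfl⟩ := hy1
    obtain ⟨w, hw, e, he, heq⟩ := Set.mem_mul.1 hy2
    rw [Set.mem_singleton_iff] at he
    subst he
    have hgφ : g ∈ Sconj S φ := ((memS2 g).1 hg).1
    have hwG : w ∈ Gam n ρ i := by
      refine Subgroup.closure_mono (Set.image_mono ?_) hw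
      intro l hl
      obtain ⟨h1, h2⟩ := hl
      exact ⟨by omega, h2⟩
    exact cond_a n ρ S hgen hS (φ * ψ) (by omega : i < n) hwG
      (by rw [heq]; exact Sconj_conj S hgφ ψ)
  · -- (ii)(b)
    intro ψ hψ i k j hik hkj hj x hx
    have hn4 : j ≤ n - 2 := by omega
    have hψA : ψ ∈ Ac ρ (n - 1) := hψ
    obtain ⟨hx1, hx2⟩ := hx
    obtain ⟨β, hβ, s, hs, heq⟩ := Set.mem_mul.1 hx2
    obtain ⟨g, hg, rfl⟩ := hs
    have hgφ : g ∈ Sconj S φ := ((memS2 g).1 hg).1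
    have hgA : g ∈ Ac ρ (n - 1) := ((memS2 g).1 hg).2
    have hsθ : ψ⁻¹ * g * ψ ∈ Sconj S (φ * ψ) := Sconj_conj S hgφ ψ
    have hsA : ψ⁻¹ * g * ψ ∈ Ac ρ (n - 1) := mul_mem (mul_mem (inv_mem hψA) hgA) hψA
    have hx1B : x ∈ BB n ρ (i + 1) := by
      rw [SetLike.mem_coe] at hx1
      refine Subgroup.closure_mono (Set.image_mono ?_) hx1
      intro l hl
      obtain ⟨h1, h2⟩ := hl
      exact ⟨by omega, by omega⟩
    have hx1A : x ∈ Ac ρ (n - 1) := by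
      rw [SetLike.mem_coe] at hx1
      refine Subgroup.closure_mono (Set.image_mono ?_) hx1
      intro l hl
      obtain ⟨h1, h2⟩ := hl
      exact h2
    have hβA : β ∈ Ac ρ j := hβ
    have hsx : β⁻¹ * x = ψ⁻¹ * g * ψ := by rw [← heq, inv_mul_cancel_left]
    obtain ⟨α, hα, δ, hδB, hδA, τ, hτ, heq2⟩ :=
      cond_b n ρ S hgen hS (φ * ψ) (by omega : i + 1 ≤ k) hkj (by omega) (by omega)
        hx1B hβA (by rw [hsx]; exact hsθ)
    obtain ⟨a, ha, b, hb, hαab⟩ := Gam_split n ρ hinv hcomm (by omega : k < n) hα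
    have hyval : (a⁻¹ * x) * δ⁻¹ = b * (δ * τ * δ⁻¹) := by
      rw [heq2, hαab]; group
    have hyA : (a⁻¹ * x) * δ⁻¹ ∈ Ac ρ (n - 1) :=
      mul_mem (mul_mem (inv_mem (Ac_mono ρ (by omega) ha)) hx1A)
        (inv_mem (Ac_mono ρ (by omega) hδA))
    have hδτ : δ * τ * δ⁻¹ ∈ Sconj S (φ * ψ * δ⁻¹) := by
      have := Sconj_conj S hτ δ⁻¹
      rwa [inv_inv] at this
    obtain ⟨μ, hμB, hμA, hμs, hμAc⟩ :=
      mirrorH n ρ S hgen hinv hcomm hint hS (φ * ψ * δ⁻¹) (by omega : 1 ≤ k + 1)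
        (by omega : k + 1 ≤ n - 1) (le_refl (n - 1)) _ hyA b hb
        (by rw [hyval, inv_mul_cancel_left]; exact hδτ)
    set sfin := μ⁻¹ * ((a⁻¹ * x) * δ⁻¹) with hsfin
    set rfin := δ⁻¹ * sfin * δ with hrfin
    have hrS : rfin ∈ Sconj S (φ * ψ) := by
      have := Sconj_conj S hμs δ
      rwa [show φ * ψ * δ⁻¹ * δ = φ * ψ by group] at this
    have hrA : rfin ∈ Ac ρ (n - 1) :=
      mul_mem (mul_mem (inv_mem (Ac_mono ρ (by omega) hδA)) hμAc)
        (Ac_mono ρ (by omega) hδA)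
    have heqfin : ((a * μ) * δ) * rfin = x := by
      rw [hrfin, hsfin]; group
    rw [← heqfin]
    refine Set.mul_mem_mul (Set.mul_mem_mul ?_ ?_) ?_
    · rw [SetLike.mem_coe]
      refine mul_mem ?_ ?_
      · refine Subgroup.closure_mono (Set.image_mono ?_) ha
        intro l hl
        have hl' : l < k := hl
        exact ⟨by omega, by omega⟩
      · have hμint := mem_inter_closure n ρ hint (I := {l | k + 1 ≤ l ∧ l < n})
          (J := {l | l < n - 1}) (by intro l hl; exact hl.2)
          (by intro l hl; have : l < n - 1 := hl; exact Set.mem_Iio.2 (by omega)) hμB hμA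
        refine Subgroup.closure_mono (Set.image_mono ?_) hμint
        rintro l ⟨hl1, hl2⟩
        obtain ⟨h1, h2⟩ := hl1
        have h3 : l < n - 1 := hl2
        exact ⟨h3, by omega⟩
    · constructor
      · rw [SetLike.mem_coe]
        have hδint := mem_inter_closure n ρ hint (I := {l | i + 1 ≤ l ∧ l < n})
          (J := {l | l < j}) (by intro l hl; exact hl.2)
          (by intro l hl; have : l < j := hl; exact Set.mem_Iio.2 (by omega)) hδB hδA
        refine Subgroup.closure_mono (Set.image_mono ?_) hδint
        rintro l ⟨hl1, hl2⟩
        obtain ⟨h1, h2⟩ := hl1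
        have h3 : l < j := hl2
        exact ⟨by omega, by omega⟩
      · exact hδA
    · refine ⟨ψ * rfin * ψ⁻¹, ?_, by group⟩
      rw [SetLike.mem_coe, memS2]
      constructor
      · exact conj_back S hrS
      · exact mul_mem (mul_mem hψA hrA) (inv_mem hψA)
  · -- (ii)(c)
    intro i hi x hx
    obtain ⟨hx1, hx2⟩ := hx
    obtain ⟨β, hβ, s, hs, heq⟩ := Set.mem_mul.1 hx2
    have hsS : s ∈ Sconj S φ := ((memS2 s).1 hs).1
    have hx1B : x ∈ BB n ρ (i + 1) := by
      rw [SetLike.mem_coe] at hx1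
      refine Subgroup.closure_mono (Set.image_mono ?_) hx1
      intro l hl
      obtain ⟨h1, h2⟩ := hl
      exact ⟨by omega, by omega⟩
    have hx1A : x ∈ Ac ρ (n - 1) := by
      rw [SetLike.mem_coe] at hx1
      refine Subgroup.closure_mono (Set.image_mono ?_) hx1
      intro l hl
      obtain ⟨h1, h2⟩ := hl
      exact h2
    have hβA : β ∈ Ac ρ (i + 1) := hβ
    have hxS : x ∈ Sconj S φ := by
      refine RP_all n ρ S hgen hinv hcomm hint hS φ (i + 1) (by omega) (by omega) x hx1B β hβA ?_
      rw [show β⁻¹ * x = s by rw [← heq, inv_mul_cancel_left]]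
      exact hsS
    rw [SetLike.mem_coe, memS2]
    exact ⟨hxS, hx1A⟩
  · -- (iii)
    apply Set.Subset.antisymm
    · rintro g ⟨hgT, hgP⟩
      have hgφ : g ∈ Sconj S φ := by rwa [SetLike.mem_coe, hmapS] at hgT
      obtain ⟨u, hu, v, hv, heq⟩ := Set.mem_mul.1 hgP
      have huB : u ∈ BB n ρ 1 := by rwa [SetLike.mem_coe, hG0] at hu
      have hvA : v ∈ Ac ρ (n - 1) := by rwa [SetLike.mem_coe, hGN] at hv
      by_cases hn : 2 ≤ n
      · obtain ⟨μ, hμB, hμA, hμs, hμBB⟩ :=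
          Hfull n ρ S hgen hinv hcomm hint hS φ (le_refl 1) (by omega : 1 ≤ n - 1)
            (le_refl (n - 1)) u⁻¹ (inv_mem huB) v hvA
            (by rw [show v⁻¹ * u⁻¹ = (u * v)⁻¹ by group, heq]; exact inv_mem hgφ)
        have hpS1 : u * μ ∈ S1 := by
          rw [memS1]
          constructor
          · have := inv_mem hμs
            rwa [show (μ⁻¹ * u⁻¹)⁻¹ = u * μ by group] at this
          · have := inv_mem hμBB
            rwa [show (μ⁻¹ * u⁻¹)⁻¹ = u * μ by group] at this
        have hqS2 : μ⁻¹ * v ∈ S2 := by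
          rw [memS2]
          constructor
          · have : μ⁻¹ * v = (μ⁻¹ * u⁻¹) * g := by rw [← heq]; group
            rw [this]; exact mul_mem hμs hgφ
          · exact mul_mem (inv_mem hμA) hvA
        have hgeq : (u * μ) * (μ⁻¹ * v) = g := by rw [← heq]; group
        rw [← hgeq]
        exact Set.mul_mem_mul hpS1 hqS2
      · -- degenerate n ≤ 1
        have hu1 : u = 1 := by
          have hempty : {l : ℕ | 1 ≤ l ∧ l < n} = (∅ : Set ℕ) := by
            ext l; simp only [Set.mem_setOf_eq, Set.mem_empty_iff_false, iff_false]; omega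
          have := huB
          rw [BB, hempty, Set.image_empty, Subgroup.closure_empty, Subgroup.mem_bot] at this
          exact this
        have hv1 : v = 1 := by
          have hempty : {l : ℕ | l < n - 1} = (∅ : Set ℕ) := by
            ext l; simp only [Set.mem_setOf_eq, Set.mem_empty_iff_false, iff_false]; omega
          have := hvA
          rw [Ac, hempty, Set.image_empty, Subgroup.closure_empty, Subgroup.mem_bot] at this
          exact this
        have hg1 : g = 1 := by rw [← heq, hu1, hv1, one_mul]
        rw [hg1, show (1 : G) = 1 * 1 by rw [one_mul]]
        exact Set.mul_mem_mul (one_mem S1) (one_mem S2)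
    · rintro g hg
      obtain ⟨p, hp, q, hq, heq⟩ := Set.mem_mul.1 hg
      rw [SetLike.mem_coe] at hp hq
      constructor
      · rw [← heq]
        exact Subgroup.mul_mem _ ((Subgroup.mem_inf.1 hp).1) ((Subgroup.mem_inf.1 hq).1)
      · rw [← heq]
        exact Set.mul_mem_mul ((Subgroup.mem_inf.1 hp).2) ((Subgroup.mem_inf.1 hq).2)
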